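/- Let m_k = ∑_{j=1}^K z_j^k ∑_{ℓ=0}^{ℓ_j - 1} c_{ℓ,j} k^ℓ with |z_j| = 1. The measurement map P sending the parameter vector ({c_{ℓ,j}}, {z_j}) ∈ ℂ^R (with R = ∑_j (ℓ_j + 1)) to the vector of measurements (m_{t}, m_{t+p}, ..., m_{t+(R-1)p}) has invertible Jacobian at a point if and only if z_j^p ≠ z_i^p for all i ≠ j and c_{ℓ_j - 1, j} ≠ 0 for all j. -/

import Mathlib

open Polynomial

noncomputable def pronyT (c u : ℂ) (r : ℂ[X]) : ℂ[X] :=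
  C u * r.comp (X + C 1) - C c * r

lemma pronyT_eval (c u : ℂ) (r : ℂ[X]) (y : ℂ) :
    (pronyT c u r).eval y = u * r.eval (y + 1) - c * r.eval y := by
  simp [pronyT, eval_comp]

lemma pronyComp_natDegree (r : ℂ[X]) : (r.comp (X + C 1)).natDegree = r.natDegree := by
  rw [natDegree_comp, natDegree_X_add_C, mul_one]

lemma pronyComp_leadingCoeff (r : ℂ[X]) :
    (r.comp (X + C 1)).leadingCoeff = r.leadingCoeff := by
  rw [leadingCoeff_comp (by rw [natDegree_X_add_C]; exact one_ne_zero), leadingCoeff_X_add_C, one_pow, mul_one]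

lemma pronyComp_degree (r : ℂ[X]) : (r.comp (X + C 1)).degree = r.degree := by
  rcases eq_or_ne r 0 with h | h
  · simp [h]
  · have h2 : r.comp (X + C 1) ≠ 0 := by
      intro hc
      apply h
      have := pronyComp_leadingCoeff r
      rw [hc, leadingCoeff_zero] at this
      exact leadingCoeff_eq_zero.mp this.symm
    rw [degree_eq_natDegree h, degree_eq_natDegree h2, pronyComp_natDegree]

lemma pronyT_degree_le (c u : ℂ) (r : ℂ[X]) : (pronyT c u r).degree ≤ r.degree := by
  refine le_trans (degree_sub_le _ _) (max_le ?_ ?_)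
  · refine le_trans (degree_mul_le _ _) ?_
    calc degree (C u) + degree (r.comp (X + C 1)) ≤ 0 + r.degree := by
          rw [pronyComp_degree]; exact add_le_add degree_C_le (le_refl _)
      _ = r.degree := by rw [zero_add]
  · refine le_trans (degree_mul_le _ _) ?_
    calc degree (C c) + degree r ≤ 0 + r.degree := add_le_add degree_C_le (le_refl _)
      _ = r.degree := by rw [zero_add]

lemma pronyT_iter_degree_le (c u : ℂ) (r : ℂ[X]) (m : ℕ) :
    ((pronyT c u)^[m] r).degree ≤ r.degree := by
  induction m with
  | zero => simp
  | succ m ih =>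
    rw [Function.iterate_succ_apply']
    exact le_trans (pronyT_degree_le _ _ _) ih

lemma pronyT_inj {c u : ℂ} (hu : u ≠ 0) (hne : u ≠ c) {r : ℂ[X]}
    (h : pronyT c u r = 0) : r = 0 := by
  by_contra hr
  have heq : C u * r.comp (X + C 1) = C c * r := by
    have := sub_eq_zero.mp h
    simpa [pronyT] using this
  have hlc := congrArg leadingCoeff heq
  rw [leadingCoeff_mul, leadingCoeff_mul, leadingCoeff_C, leadingCoeff_C,
    pronyComp_leadingCoeff] at hlc
  have hlr : r.leadingCoeff ≠ 0 := leadingCoeff_ne_zero.mpr hr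
  exact hne (mul_right_cancel₀ hlr hlc)

lemma pronyT_iter_inj {c u : ℂ} (hu : u ≠ 0) (hne : u ≠ c) (m : ℕ) {r : ℂ[X]}
    (h : (pronyT c u)^[m] r = 0) : r = 0 := by
  induction m with
  | zero => simpa using h
  | succ m ih =>
    rw [Function.iterate_succ_apply'] at h
    exact ih (pronyT_inj hu hne h)

lemma pronyT_same_degree_lt {c : ℂ} {r : ℂ[X]} (hr : r ≠ 0) :
    (pronyT c c r).degree < r.degree := by
  have h1 : pronyT c c r = C c * (r.comp (X + C 1) - r) := by
    rw [mul_sub]; rfl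
  have hcomp_ne : r.comp (X + C 1) ≠ 0 := by
    intro hc
    apply hr
    have := pronyComp_leadingCoeff r
    rw [hc, leadingCoeff_zero] at this
    exact leadingCoeff_eq_zero.mp this.symm
  have h2 : (r.comp (X + C 1) - r).degree < r.degree := by
    have := degree_sub_lt (pronyComp_degree r) hcomp_ne (pronyComp_leadingCoeff r)
    rwa [pronyComp_degree r] at this
  calc (pronyT c c r).degree ≤ degree (C c) + (r.comp (X + C 1) - r).degree := by
        rw [h1]; exact degree_mul_le _ _
    _ ≤ 0 + (r.comp (X + C 1) - r).degree := add_le_add degree_C_le (le_refl _)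
    _ = (r.comp (X + C 1) - r).degree := zero_add _
    _ < r.degree := h2

lemma pronyT_same_iter_zero (c : ℂ) : ∀ (d : ℕ) (r : ℂ[X]), r.degree ≤ (d : ℕ) →
    (pronyT c c)^[d + 1] r = 0 := by
  intro d
  induction d with
  | zero =>
    intro r hdeg
    rcases eq_or_ne r 0 with h | h
    · simp [h, pronyT]
    · have ha := degree_le_zero_iff.mp (by simpa using hdeg)
      rw [ha]
      simp [pronyT]
  | succ d ih =>
    intro r hdeg
    rcases eq_or_ne r 0 with h | h
    · subst h
      rw [Function.iterate_succ_apply]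
      have : pronyT c c 0 = 0 := by simp [pronyT]
      rw [this]
      exact ih 0 (by simp)
    · rw [Function.iterate_succ_apply]
      apply ih
      have hlt : (pronyT c c r).degree < r.degree := pronyT_same_degree_lt h
      have hlt2 : (pronyT c c r).degree < ((d : ℕ) + 1 : ℕ) :=
        lt_of_lt_of_le hlt (by exact_mod_cast hdeg)
      rcases eq_or_ne (pronyT c c r) 0 with h0 | h0
      · simp [h0]
      · rw [degree_eq_natDegree h0] at hlt2 ⊢
        exact_mod_cast Nat.lt_succ_iff.mp (by exact_mod_cast hlt2)

/-- difference operator on sequences -/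
def pronyD (c : ℂ) (a : ℕ → ℂ) : ℕ → ℂ := fun n => a (n + 1) - c * a n

lemma pronyD_iter_vanish (c : ℂ) : ∀ (m : ℕ) (a : ℕ → ℂ) (N : ℕ),
    (∀ n < N, a n = 0) → ∀ n, n + m < N → (pronyD c)^[m] a n = 0 := by
  intro m
  induction m with
  | zero => intro a N h n hn; simpa using h n (by omega)
  | succ m ih =>
    intro a N h n hn
    rw [Function.iterate_succ_apply]
    refine ih (pronyD c a) (N - 1) ?_ n (by omega)
    intro k hk
    simp only [pronyD]
    rw [h k (by omega), h (k + 1) (by omega), mul_zero, sub_zero]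

lemma pronyD_transform (c : ℂ) {K : ℕ} (u : Fin K → ℂ) (r : Fin K → ℂ[X]) :
    pronyD c (fun n : ℕ => ∑ j, u j ^ n * (r j).eval (n : ℂ)) =
      fun n : ℕ => ∑ j, u j ^ n * (pronyT c (u j) (r j)).eval (n : ℂ) := by
  funext n
  simp only [pronyD, Finset.mul_sum, ← Finset.sum_sub_distrib]
  refine Finset.sum_congr rfl fun j _ => ?_
  rw [pronyT_eval]
  push_cast
  ring

lemma pronyD_iter_transform (c : ℂ) {K : ℕ} (u : Fin K → ℂ) (m : ℕ) (r : Fin K → ℂ[X]) :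
    (pronyD c)^[m] (fun n : ℕ => ∑ j, u j ^ n * (r j).eval (n : ℂ)) =
      fun n : ℕ => ∑ j, u j ^ n * ((pronyT c (u j))^[m] (r j)).eval (n : ℂ) := by
  induction m generalizing r with
  | zero => simp
  | succ m ih =>
    rw [Function.iterate_succ_apply, pronyD_transform]
    rw [ih (fun j => pronyT c (u j) (r j))]
    funext n
    refine Finset.sum_congr rfl fun j _ => ?_
    rw [← Function.iterate_succ_apply]

lemma prony_exp_poly : ∀ (K : ℕ) (u : Fin K → ℂ) (d : Fin K → ℕ) (r : Fin K → ℂ[X]),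
    Function.Injective u → (∀ j, u j ≠ 0) → (∀ j, (r j).degree ≤ (d j : ℕ)) →
    (∀ n < ∑ j, (d j + 1), ∑ j, u j ^ n * (r j).eval (n : ℂ) = 0) →
    ∀ j, r j = 0 := by
  intro K
  induction K with
  | zero => intro u d r _ _ _ _ j; exact j.elim0
  | succ K IH =>
    intro u d r hinj hu hdeg hvan
    set m := d 0 + 1 with hm
    have hN : ∑ j, (d j + 1) = m + ∑ j : Fin K, (d j.succ + 1) := by
      rw [Fin.sum_univ_succ]
    have hb := pronyD_iter_transform (u 0) u m r
    have hzero0 : (pronyT (u 0) (u 0))^[m] (r 0) = 0 :=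
      pronyT_same_iter_zero (u 0) (d 0) (r 0) (hdeg 0)
    have hsucc_r : ∀ j : Fin K, r j.succ = 0 := by
      have hvan' : ∀ n < ∑ j : Fin K, (d j.succ + 1),
          ∑ j : Fin K, (u j.succ) ^ n *
            ((pronyT (u 0) (u j.succ))^[m] (r j.succ)).eval (n : ℂ) = 0 := by
        intro n hn
        have h1 : (pronyD (u 0))^[m] (fun n : ℕ => ∑ j, u j ^ n * (r j).eval (n : ℂ)) n = 0 := by
          refine pronyD_iter_vanish (u 0) m _ (∑ j, (d j + 1)) hvan n (by omega)
        rw [hb] at h1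
        have h2 : ∑ j : Fin (K + 1), u j ^ n *
            ((pronyT (u 0) (u j))^[m] (r j)).eval (n : ℂ) = 0 := h1
        rw [Fin.sum_univ_succ, hzero0] at h2
        simpa using h2
      have := IH (fun j => u j.succ) (fun j => d j.succ)
        (fun j => (pronyT (u 0) (u j.succ))^[m] (r j.succ))
        (fun a b hab => by
          have := hinj hab
          exact Fin.succ_injective _ this)
        (fun j => hu _)
        (fun j => le_trans (pronyT_iter_degree_le _ _ _ _) (hdeg _)) hvan'
      intro j
      refine pronyT_iter_inj (hu j.succ) ?_ m (this j)
      intro h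
      exact (Fin.succ_ne_zero j) (hinj h)
    have h0eval : ∀ n < m, (r 0).eval (n : ℂ) = 0 := by
      intro n hn
      have := hvan n (by omega)
      rw [Fin.sum_univ_succ] at this
      have h2 : ∑ j : Fin K, u j.succ ^ n * (r j.succ).eval (n : ℂ) = 0 := by
        refine Finset.sum_eq_zero fun j _ => ?_
        rw [hsucc_r j]; simp
      rw [h2, add_zero] at this
      exact (mul_eq_zero.mp this).resolve_left (pow_ne_zero n (hu 0))
    have h0 : r 0 = 0 := by
      refine eq_zero_of_natDegree_lt_card_of_eval_eq_zero (r 0)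
        (f := fun i : Fin m => ((i : ℕ) : ℂ)) ?_ ?_ ?_
      · intro a b hab
        have : (a : ℕ) = (b : ℕ) := Nat.cast_injective hab
        exact Fin.ext this
      · intro i; exact h0eval i i.isLt
      · rw [Fintype.card_fin]
        have := natDegree_le_iff_degree_le.mpr (hdeg 0)
        omega
    intro j
    refine Fin.cases h0 hsucc_r j

noncomputable def pronyCoef {K : ℕ} {L : Fin K → ℕ} (c : (j : Fin K) → Fin (L j) → ℂ)
    (j : Fin K) (ℓ : ℕ) : ℂ :=
  if h : ℓ < L j then c j ⟨ℓ, h⟩ else 0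

lemma pronyCoef_eq {K : ℕ} {L : Fin K → ℕ} (c : (j : Fin K) → Fin (L j) → ℂ)
    {j : Fin K} (ℓ : Fin (L j)) : pronyCoef c j (ℓ : ℕ) = c j ℓ := by
  simp [pronyCoef]

noncomputable def pronyS (t p : ℕ) : ℂ[X] := C (p : ℂ) * X + C (t : ℂ)

lemma pronyS_eval (t p : ℕ) (n : ℕ) :
    (pronyS t p).eval ((n : ℕ) : ℂ) = ((t + n * p : ℕ) : ℂ) := by
  simp [pronyS]; push_cast; ring

noncomputable def pronyG {K : ℕ} {L : Fin K → ℕ}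
    (t p : ℕ) (x v : ((j : Fin K) → Fin (L j) → ℂ) × (Fin K → ℂ)) (j : Fin K) : ℂ[X] :=
  (∑ ℓ ∈ Finset.range (L j), C (pronyCoef v.1 j ℓ) * (pronyS t p) ^ ℓ)
    + C ((x.2 j)⁻¹ * v.2 j) * ∑ ℓ ∈ Finset.range (L j), C (pronyCoef x.1 j ℓ) * (pronyS t p) ^ (ℓ + 1)

lemma pronyS_natDegree_le (t p : ℕ) : (pronyS t p).natDegree ≤ 1 := natDegree_linear_le

lemma pronyG_degree {K : ℕ} {L : Fin K → ℕ} (t p : ℕ)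
    (x v : ((j : Fin K) → Fin (L j) → ℂ) × (Fin K → ℂ)) (j : Fin K) (hLj : 0 < L j) :
    (pronyG t p x v j).degree ≤ ((L j : ℕ) : WithBot ℕ) := by
  have hS : ∀ k : ℕ, k ≤ L j → ∀ a : ℂ, (C a * (pronyS t p) ^ k).natDegree ≤ L j := by
    intro k hk a
    refine le_trans (natDegree_mul_le) ?_
    rw [natDegree_C, zero_add]
    refine le_trans (natDegree_pow_le) ?_
    calc k * (pronyS t p).natDegree ≤ k * 1 := Nat.mul_le_mul_left k (pronyS_natDegree_le t p)
      _ ≤ L j := by omega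
  have h : (pronyG t p x v j).natDegree ≤ L j := by
    refine le_trans (natDegree_add_le _ _) (max_le ?_ ?_)
    · exact natDegree_sum_le_of_forall_le _ _ fun ℓ hℓ =>
        hS ℓ (le_of_lt (Finset.mem_range.mp hℓ)) _
    · refine le_trans (natDegree_mul_le) ?_
      rw [natDegree_C, zero_add]
      exact natDegree_sum_le_of_forall_le _ _ fun ℓ hℓ =>
        hS (ℓ + 1) (Finset.mem_range.mp hℓ) _
  exact le_trans (degree_le_natDegree) (by exact_mod_cast h)

lemma pronyG_coeff_top {K : ℕ} {L : Fin K → ℕ} (t p : ℕ) (hp : p ≠ 0)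
    (x v : ((j : Fin K) → Fin (L j) → ℂ) × (Fin K → ℂ)) (j : Fin K) (hLj : 0 < L j) :
    (pronyG t p x v j).coeff (L j) =
      (x.2 j)⁻¹ * v.2 j * pronyCoef x.1 j (L j - 1) * (p : ℂ) ^ (L j) := by
  have hSnat : (pronyS t p).natDegree = 1 := natDegree_linear (by exact_mod_cast hp)
  have hSlead : (pronyS t p).leadingCoeff = (p : ℂ) := leadingCoeff_linear (by exact_mod_cast hp)
  have hCk : ∀ (k : ℕ) (a : ℂ), k < L j → (C a * (pronyS t p) ^ k).coeff (L j) = 0 := by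
    intro k a hk
    apply coeff_eq_zero_of_natDegree_lt
    refine lt_of_le_of_lt (le_trans natDegree_mul_le ?_) hk
    rw [natDegree_C, zero_add]
    refine le_trans natDegree_pow_le ?_
    rw [hSnat, mul_one]
  rw [pronyG, coeff_add]
  have h1 : (∑ ℓ ∈ Finset.range (L j), C (pronyCoef v.1 j ℓ) * (pronyS t p) ^ ℓ).coeff (L j) = 0 := by
    rw [finset_sum_coeff]
    exact Finset.sum_eq_zero fun ℓ hℓ => hCk ℓ _ (Finset.mem_range.mp hℓ)
  have hStop : ((pronyS t p) ^ (L j)).coeff (L j) = (p : ℂ) ^ (L j) := by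
    have hd : ((pronyS t p) ^ (L j)).natDegree = L j := by
      rw [natDegree_pow, hSnat, mul_one]
    have hcn : (pronyS t p ^ L j).coeff ((pronyS t p ^ L j).natDegree)
        = (pronyS t p ^ L j).leadingCoeff := coeff_natDegree
    rw [hd, leadingCoeff_pow, hSlead] at hcn
    exact hcn
  have h2 : (∑ ℓ ∈ Finset.range (L j), C (pronyCoef x.1 j ℓ) * (pronyS t p) ^ (ℓ + 1)).coeff (L j)
      = pronyCoef x.1 j (L j - 1) * (p : ℂ) ^ (L j) := by
    rw [finset_sum_coeff]
    rw [Finset.sum_eq_single (L j - 1)]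
    · rw [coeff_C_mul]
      have : L j - 1 + 1 = L j := by omega
      rw [this, hStop]
    · intro k hk hkne
      have hk' : k + 1 < L j ∨ L j < k + 1 := by
        rcases Nat.lt_or_ge (k + 1) (L j) with h | h
        · exact Or.inl h
        · right
          rcases Nat.eq_or_lt_of_le h with h' | h'
          · exact absurd (by omega) hkne
          · exact h'
      rcases hk' with h | h
      · exact hCk _ _ h
      · exact absurd (Finset.mem_range.mp hk) (by omega)
    · intro h
      exact absurd (Finset.mem_range.mpr (by omega)) h
  rw [h1, coeff_C_mul, h2, zero_add]
  ring

lemma prony_sum_S_eq_zero (t p : ℕ) (hp : p ≠ 0) (m : ℕ) (a : ℕ → ℂ)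
    (h : ∑ ℓ ∈ Finset.range m, C (a ℓ) * (pronyS t p) ^ ℓ = 0) :
    ∀ ℓ < m, a ℓ = 0 := by
  set q : ℂ[X] := ∑ ℓ ∈ Finset.range m, C (a ℓ) * X ^ ℓ with hq
  have hqz : q = 0 := by
    apply zero_of_eval_zero
    intro w
    have heval := congrArg (Polynomial.eval ((w - t) / p)) h
    have hpC : (p : ℂ) ≠ 0 := by exact_mod_cast hp
    have hSw : (pronyS t p).eval ((w - t) / p) = w := by
      simp [pronyS]
      field_simp
      ring
    rw [eval_finset_sum, eval_zero] at heval
    have : q.eval w = ∑ ℓ ∈ Finset.range m, a ℓ * w ^ ℓ := by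
      rw [hq, eval_finset_sum]
      exact Finset.sum_congr rfl fun ℓ _ => by rw [eval_mul, eval_C, eval_pow, eval_X]
    rw [this, ← heval]
    refine Finset.sum_congr rfl fun ℓ _ => ?_
    rw [eval_mul, eval_C, eval_pow, hSw]
  intro ℓ hℓ
  have := congrArg (fun r => Polynomial.coeff r ℓ) hqz
  simp only [hq, finset_sum_coeff, coeff_C_mul, coeff_X_pow, coeff_zero] at this
  rw [Finset.sum_eq_single ℓ] at this
  · simpa using this
  · intro k hk hkne
    simp [Ne.symm hkne]
  · intro hmem
    exact absurd (Finset.mem_range.mpr hℓ) hmem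

lemma prony_key {K : ℕ} {L : Fin K → ℕ} (t p : ℕ)
    (x v : ((j : Fin K) → Fin (L j) → ℂ) × (Fin K → ℂ)) (j : Fin K)
    (hzj : x.2 j ≠ 0) (n : ℕ) :
    x.2 j ^ (t + n * p) * (∑ ℓ : Fin (L j), v.1 j ℓ * ((t + n * p : ℕ) : ℂ) ^ (ℓ : ℕ))
      + (∑ ℓ : Fin (L j), x.1 j ℓ * ((t + n * p : ℕ) : ℂ) ^ (ℓ : ℕ)) *
        (((t + n * p : ℕ) : ℂ) * x.2 j ^ (t + n * p - 1) * v.2 j)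
    = x.2 j ^ t * (x.2 j ^ p) ^ n * ((pronyG t p x v j).eval ((n : ℕ) : ℂ)) := by
  set s := t + n * p with hs_def
  have h1 : ∑ ℓ : Fin (L j), v.1 j ℓ * ((s : ℕ) : ℂ) ^ (ℓ : ℕ)
      = ∑ ℓ ∈ Finset.range (L j), pronyCoef v.1 j ℓ * ((s : ℕ) : ℂ) ^ ℓ := by
    rw [← Fin.sum_univ_eq_sum_range (fun ℓ => pronyCoef v.1 j ℓ * ((s : ℕ) : ℂ) ^ ℓ) (L j)]
    refine Finset.sum_congr rfl fun ℓ _ => ?_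
    simp [pronyCoef]
  have h2 : ∑ ℓ : Fin (L j), x.1 j ℓ * ((s : ℕ) : ℂ) ^ (ℓ : ℕ)
      = ∑ ℓ ∈ Finset.range (L j), pronyCoef x.1 j ℓ * ((s : ℕ) : ℂ) ^ ℓ := by
    rw [← Fin.sum_univ_eq_sum_range (fun ℓ => pronyCoef x.1 j ℓ * ((s : ℕ) : ℂ) ^ ℓ) (L j)]
    refine Finset.sum_congr rfl fun ℓ _ => ?_
    simp [pronyCoef]
  have heval : (pronyG t p x v j).eval ((n : ℕ) : ℂ)
      = (∑ ℓ ∈ Finset.range (L j), pronyCoef v.1 j ℓ * ((s : ℕ) : ℂ) ^ ℓ)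
        + (x.2 j)⁻¹ * v.2 j *
          ∑ ℓ ∈ Finset.range (L j), pronyCoef x.1 j ℓ * ((s : ℕ) : ℂ) ^ (ℓ + 1) := by
    rw [pronyG, eval_add, eval_mul, eval_C, eval_finset_sum, eval_finset_sum]
    congr 1
    · refine Finset.sum_congr rfl fun ℓ _ => ?_
      rw [eval_mul, eval_C, eval_pow, pronyS_eval]
    · congr 1
      refine Finset.sum_congr rfl fun ℓ _ => ?_
      rw [eval_mul, eval_C, eval_pow, pronyS_eval]
  have hpow : x.2 j ^ t * (x.2 j ^ p) ^ n = x.2 j ^ s := by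
    rw [← pow_mul, ← pow_add, Nat.mul_comm p n]
  have hshift : ∑ ℓ ∈ Finset.range (L j), pronyCoef x.1 j ℓ * ((s : ℕ) : ℂ) ^ (ℓ + 1)
      = ((s : ℕ) : ℂ) * ∑ ℓ ∈ Finset.range (L j), pronyCoef x.1 j ℓ * ((s : ℕ) : ℂ) ^ ℓ := by
    rw [Finset.mul_sum]
    exact Finset.sum_congr rfl fun ℓ _ => by ring
  rcases Nat.eq_zero_or_pos s with hs | hs
  · have hsc : ((s : ℕ) : ℂ) = 0 := by rw [hs]; simp
    rw [h1, h2, heval, hpow, hshift, hsc]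
    ring
  · have hzpow : x.2 j ^ s * (x.2 j)⁻¹ = x.2 j ^ (s - 1) := by
      have h' : x.2 j ^ s = x.2 j ^ (s - 1) * x.2 j := by
        conv_lhs => rw [show s = s - 1 + 1 from by omega]
        rw [pow_succ]
      rw [h', mul_assoc, mul_inv_cancel₀ hzj, mul_one]
    rw [h1, h2, heval, hpow, hshift]
    linear_combination (-(((s : ℕ) : ℂ) *
      (∑ ℓ ∈ Finset.range (L j), pronyCoef x.1 j ℓ * ((s : ℕ) : ℂ) ^ ℓ) * v.2 j)) * hzpow



/-- Regular points of the decimated polynomial-Prony measurement map: the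
Jacobian of the map sending the parameters `({c_{ℓ,j}}, {z_j})` to the
measurements `(m_t, m_{t+p}, …, m_{t+(R-1)p})` is invertible if and only if the
decimated nodes `z_j^p` are pairwise distinct and the leading coefficients
`c_{ℓ_j - 1, j}` are all nonzero. -/
theorem polynomial_prony_jacobian_regular
    (K : ℕ) (L : Fin K → ℕ) (hL : ∀ j, 0 < L j)
    (t p : ℕ) (hp : 1 ≤ p) (R : ℕ) (hR : R = ∑ j, (L j + 1))
    (P : (((j : Fin K) → Fin (L j) → ℂ) × (Fin K → ℂ)) → (Fin R → ℂ))
    (hP : ∀ x n, P x n =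
      ∑ j, x.2 j ^ (t + (n : ℕ) * p) *
        ∑ ℓ : Fin (L j), x.1 j ℓ * ((t + (n : ℕ) * p : ℕ) : ℂ) ^ (ℓ : ℕ))
    (x : ((j : Fin K) → Fin (L j) → ℂ) × (Fin K → ℂ))
    (hz : ∀ j, ‖x.2 j‖ = 1) :
    Function.Bijective (fderiv ℂ P x) ↔
      ((∀ i j : Fin K, i ≠ j → x.2 i ^ p ≠ x.2 j ^ p) ∧
        ∀ j, x.1 j ⟨L j - 1, Nat.sub_lt (hL j) one_pos⟩ ≠ 0) := by
    classical
  have hz0 : ∀ j, x.2 j ≠ 0 := by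
    intro j h
    have := hz j
    rw [h] at this
    simp at this
  -- coordinate projections as continuous linear maps
  let E := (((j : Fin K) → Fin (L j) → ℂ) × (Fin K → ℂ))
  let pz : Fin K → (E →L[ℂ] ℂ) := fun j =>
    (ContinuousLinearMap.proj j).comp (ContinuousLinearMap.snd ℂ _ _)
  let pc : (j : Fin K) → Fin (L j) → (E →L[ℂ] ℂ) := fun j ℓ =>
    (ContinuousLinearMap.proj ℓ : (Fin (L j) → ℂ) →L[ℂ] ℂ).comp
      ((ContinuousLinearMap.proj j :
          ((j' : Fin K) → Fin (L j') → ℂ) →L[ℂ] (Fin (L j) → ℂ)).comp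
        (ContinuousLinearMap.fst ℂ ((j' : Fin K) → Fin (L j') → ℂ) (Fin K → ℂ)))
  have hder : HasFDerivAt P
      (ContinuousLinearMap.pi (fun n : Fin R => ∑ j,
        ((x.2 j ^ (t + (n : ℕ) * p)) •
            (∑ ℓ : Fin (L j), (((t + (n : ℕ) * p : ℕ) : ℂ) ^ (ℓ : ℕ)) • pc j ℓ)
          + (∑ ℓ : Fin (L j), x.1 j ℓ * ((t + (n : ℕ) * p : ℕ) : ℂ) ^ (ℓ : ℕ)) •
            ((((t + (n : ℕ) * p : ℕ) : ℂ) * x.2 j ^ (t + (n : ℕ) * p - 1)) • pz j)))) x := by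
    have hPe : P = fun y (n : Fin R) => ∑ j, y.2 j ^ (t + (n : ℕ) * p) *
        ∑ ℓ : Fin (L j), y.1 j ℓ * ((t + (n : ℕ) * p : ℕ) : ℂ) ^ (ℓ : ℕ) := by
      funext y n
      exact hP y n
    rw [hPe]
    apply hasFDerivAt_pi.mpr
    intro n
    apply HasFDerivAt.fun_sum
    intro j _
    have hpz : HasFDerivAt (fun y : E => y.2 j) (pz j) x := (pz j).hasFDerivAt
    have hpow : HasFDerivAt (fun y : E => y.2 j ^ (t + (n : ℕ) * p))
        ((((t + (n : ℕ) * p : ℕ) : ℂ) * x.2 j ^ (t + (n : ℕ) * p - 1)) • pz j) x :=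
      (hasDerivAt_pow (t + (n : ℕ) * p) (x.2 j)).comp_hasFDerivAt x hpz
    have hsum : HasFDerivAt
        (fun y : E => ∑ ℓ : Fin (L j), y.1 j ℓ * ((t + (n : ℕ) * p : ℕ) : ℂ) ^ (ℓ : ℕ))
        (∑ ℓ : Fin (L j), (((t + (n : ℕ) * p : ℕ) : ℂ) ^ (ℓ : ℕ)) • pc j ℓ) x :=
      HasFDerivAt.fun_sum fun ℓ _ => ((pc j ℓ).hasFDerivAt).mul_const _
    exact hpow.mul hsum
  have hD : ∀ (v : E) (n : Fin R), fderiv ℂ P x v n =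
      ∑ j, x.2 j ^ t * (x.2 j ^ p) ^ (n : ℕ) *
        ((pronyG t p x v j).eval (((n : ℕ) : ℕ) : ℂ)) := by
    intro v n
    rw [hder.fderiv]
    simp only [ContinuousLinearMap.pi_apply, ContinuousLinearMap.coe_sum', Finset.sum_apply,
      ContinuousLinearMap.add_apply, ContinuousLinearMap.coe_smul', Pi.smul_apply,
      ContinuousLinearMap.coe_comp', Function.comp_apply, ContinuousLinearMap.proj_apply,
      ContinuousLinearMap.coe_snd', ContinuousLinearMap.coe_fst', smul_eq_mul, pz, pc]
    refine Finset.sum_congr rfl fun j _ => ?_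
    have hk := prony_key t p x v j (hz0 j) (n : ℕ)
    have hss : ∑ ℓ : Fin (L j), ((t + (n : ℕ) * p : ℕ) : ℂ) ^ (ℓ : ℕ) * v.1 j ℓ
        = ∑ ℓ : Fin (L j), v.1 j ℓ * ((t + (n : ℕ) * p : ℕ) : ℂ) ^ (ℓ : ℕ) :=
      Finset.sum_congr rfl fun ℓ _ => mul_comm _ _
    rw [hss]
    linear_combination hk
  -- main body
  have hpne : p ≠ 0 := by omega
  have hgdeg : ∀ (v : ((j : Fin K) → Fin (L j) → ℂ) × (Fin K → ℂ)) (j : Fin K),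
      (C (x.2 j ^ t) * pronyG t p x v j).degree ≤ ((L j : ℕ) : WithBot ℕ) := by
    intro v j
    refine le_trans (degree_mul_le _ _) ?_
    calc degree (C (x.2 j ^ t)) + (pronyG t p x v j).degree
        ≤ 0 + ((L j : ℕ) : WithBot ℕ) := add_le_add degree_C_le (pronyG_degree t p x v j (hL j))
      _ = ((L j : ℕ) : WithBot ℕ) := zero_add _
  -- kernel characterization
  have hker : ∀ v : ((j : Fin K) → Fin (L j) → ℂ) × (Fin K → ℂ),
      ((∀ j : Fin K, pronyG t p x v j = 0) → fderiv ℂ P x v = 0) := by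
    intro v hg
    funext n
    rw [hD v n]
    simp only [Pi.zero_apply]
    refine Finset.sum_eq_zero fun j _ => ?_
    rw [hg j, eval_zero, mul_zero]
  constructor
  · -- bijective → conditions
    intro hbij
    constructor
    · -- distinct decimated nodes
      by_contra hcon
      push_neg at hcon
      obtain ⟨i, j, hij, huij⟩ := hcon
      set v : ((j : Fin K) → Fin (L j) → ℂ) × (Fin K → ℂ) :=
        (fun j' ℓ => if (ℓ : ℕ) = 0 then
          (if j' = i then x.2 j ^ t else if j' = j then -(x.2 i ^ t) else 0) else 0, 0) with hv
      have hgj : ∀ j' : Fin K, pronyG t p x v j' =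
          C (if j' = i then x.2 j ^ t else if j' = j then -(x.2 i ^ t) else 0) := by
        intro j'
        rw [pronyG]
        have hv2 : v.2 j' = 0 := rfl
        rw [hv2, mul_zero, map_zero, zero_mul, add_zero]
        rw [Finset.sum_eq_single 0]
        · simp [pronyCoef, hL j', hv]
        · intro k hk hkne
          have : pronyCoef v.1 j' k = 0 := by
            rcases Nat.lt_or_ge k (L j') with h | h
            · simp [pronyCoef, h, hv, hkne]
            · simp [pronyCoef, Nat.not_lt.mpr h]
          rw [this, map_zero, zero_mul]
        · intro h
          exact absurd (Finset.mem_range.mpr (hL j')) h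
      have hD0 : fderiv ℂ P x v = 0 := by
        funext n
        rw [hD v n]
        simp only [Pi.zero_apply, hgj, eval_C]
        have hterm : ∀ j' : Fin K, x.2 j' ^ t * (x.2 j' ^ p) ^ (n : ℕ) *
            (if j' = i then x.2 j ^ t else if j' = j then -(x.2 i ^ t) else 0)
            = (if j' = i then x.2 i ^ t * (x.2 i ^ p) ^ (n : ℕ) * x.2 j ^ t else 0)
              + (if j' = j then -(x.2 j ^ t * (x.2 j ^ p) ^ (n : ℕ) * x.2 i ^ t) else 0) := by
          intro j'
          by_cases h1 : j' = i
          · subst h1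
            rw [if_pos rfl, if_pos rfl, if_neg hij, add_zero]
          · rw [if_neg h1, if_neg h1]
            by_cases h2 : j' = j
            · subst h2
              rw [if_pos rfl, if_pos rfl, zero_add]
              ring
            · rw [if_neg h2, if_neg h2, mul_zero, add_zero]
        rw [Finset.sum_congr rfl fun j' _ => hterm j']
        rw [Finset.sum_add_distrib, Finset.sum_ite_eq' Finset.univ i,
          Finset.sum_ite_eq' Finset.univ j]
        simp only [Finset.mem_univ, if_pos]
        rw [huij]
        ring
      have hv0 : v = 0 := by
        apply hbij.injective
        rw [hD0, map_zero]
      have : v.1 i ⟨0, hL i⟩ = 0 := by rw [hv0]; rfl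
      rw [hv] at this
      simp only [if_pos rfl] at this
      exact pow_ne_zero t (hz0 j) this
    · -- nonzero leading coefficients
      by_contra hcon
      push_neg at hcon
      obtain ⟨j₀, hc⟩ := hcon
      set m := L j₀ - 1 with hm
      have hLm : L j₀ = m + 1 := by have := hL j₀; omega
      set v : ((j : Fin K) → Fin (L j) → ℂ) × (Fin K → ℂ) :=
        (fun j ℓ => if j = j₀ then
            (if 1 ≤ (ℓ : ℕ) then -((x.2 j₀)⁻¹) * pronyCoef x.1 j₀ ((ℓ : ℕ) - 1) else 0)
          else 0, Pi.single j₀ 1) with hv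
      have hgj : ∀ j : Fin K, pronyG t p x v j = 0 := by
        intro j
        by_cases hj : j = j₀
        · subst hj
          rw [pronyG]
          have hv2 : v.2 j = 1 := by
            show Pi.single j 1 j = 1
            simp
          rw [hv2, mul_one]
          have hS1 : ∑ ℓ ∈ Finset.range (L j), C (pronyCoef v.1 j ℓ) * (pronyS t p) ^ ℓ
              = -(C ((x.2 j)⁻¹) *
                ∑ ℓ ∈ Finset.range m, C (pronyCoef x.1 j ℓ) * (pronyS t p) ^ (ℓ + 1)) := by
            rw [hLm, Finset.sum_range_succ']
            have hc0 : pronyCoef v.1 j 0 = 0 := by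
              simp [pronyCoef, hv, hLm]
            rw [hc0, map_zero, zero_mul, add_zero]
            calc ∑ k ∈ Finset.range m, C (pronyCoef v.1 j (k + 1)) * (pronyS t p) ^ (k + 1)
                = ∑ k ∈ Finset.range m,
                    -(C ((x.2 j)⁻¹) * (C (pronyCoef x.1 j k) * (pronyS t p) ^ (k + 1))) := by
                  refine Finset.sum_congr rfl fun i hi => ?_
                  have him := Finset.mem_range.mp hi
                  have hi' : i + 1 < L j := by rw [hLm]; omega
                  have hco : pronyCoef v.1 j (i + 1) = -((x.2 j)⁻¹) * pronyCoef x.1 j i := by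
                    simp [pronyCoef, hi', hv]
                  rw [hco, map_mul, map_neg]
                  ring
              _ = -(∑ k ∈ Finset.range m,
                    C ((x.2 j)⁻¹) * (C (pronyCoef x.1 j k) * (pronyS t p) ^ (k + 1))) := by
                  rw [Finset.sum_neg_distrib]
              _ = -(C ((x.2 j)⁻¹) *
                    ∑ k ∈ Finset.range m, C (pronyCoef x.1 j k) * (pronyS t p) ^ (k + 1)) := by
                  rw [Finset.mul_sum]
          have hS2 : ∑ ℓ ∈ Finset.range (L j), C (pronyCoef x.1 j ℓ) * (pronyS t p) ^ (ℓ + 1)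
              = ∑ ℓ ∈ Finset.range m, C (pronyCoef x.1 j ℓ) * (pronyS t p) ^ (ℓ + 1) := by
            rw [hLm, Finset.sum_range_succ]
            have hcm : pronyCoef x.1 j m = 0 := by
              have hmlt : m < L j := by omega
              rw [pronyCoef, dif_pos hmlt]
              exact hc
            rw [hcm, map_zero, zero_mul, add_zero]
          rw [hS1, hS2]
          ring
        · rw [pronyG]
          have hv2 : v.2 j = 0 := by
            show Pi.single j₀ 1 j = 0
            exact Pi.single_eq_of_ne hj _
          rw [hv2, mul_zero, map_zero, zero_mul, add_zero]
          refine Finset.sum_eq_zero fun ℓ hℓ => ?_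
          have : pronyCoef v.1 j ℓ = 0 := by
            rcases Nat.lt_or_ge ℓ (L j) with h | h
            · simp [pronyCoef, h, hv, hj]
            · simp [pronyCoef, Nat.not_lt.mpr h]
          rw [this, map_zero, zero_mul]
      have hD0 : fderiv ℂ P x v = 0 := hker v hgj
      have hv0 : v = 0 := by
        apply hbij.injective
        rw [hD0, map_zero]
      have : v.2 j₀ = 0 := by rw [hv0]; rfl
      rw [hv] at this
      simp at this
  · -- conditions → bijective
    rintro ⟨hdist, hlead⟩
    have hkerzero : ∀ v : ((j : Fin K) → Fin (L j) → ℂ) × (Fin K → ℂ),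
        fderiv ℂ P x v = 0 → v = 0 := by
      intro v hv0
      have hr : ∀ j : Fin K, C (x.2 j ^ t) * pronyG t p x v j = 0 := by
        refine prony_exp_poly K (fun j => x.2 j ^ p) L
          (fun j => C (x.2 j ^ t) * pronyG t p x v j) ?_ ?_ ?_ ?_
        · intro a b hab
          by_contra hne
          exact hdist a b hne hab
        · exact fun j => pow_ne_zero _ (hz0 j)
        · exact fun j => hgdeg v j
        · intro n hn
          have hn' : n < R := by rw [hR]; exact hn
          have h0 : fderiv ℂ P x v ⟨n, hn'⟩ = 0 := by rw [hv0]; rfl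
          rw [hD v ⟨n, hn'⟩] at h0
          rw [← h0]
          refine Finset.sum_congr rfl fun j _ => ?_
          rw [eval_mul, eval_C]
          ring
      have hg : ∀ j : Fin K, pronyG t p x v j = 0 := by
        intro j
        have := hr j
        rcases mul_eq_zero.mp this with h | h
        · exact absurd (C_eq_zero.mp h) (pow_ne_zero t (hz0 j))
        · exact h
      have hv2 : ∀ j, v.2 j = 0 := by
        intro j
        have hco := pronyG_coeff_top t p hpne x v j (hL j)
        rw [hg j, coeff_zero] at hco
        have hc' : pronyCoef x.1 j (L j - 1) ≠ 0 := by
          rw [pronyCoef, dif_pos (Nat.sub_lt (hL j) one_pos)]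
          exact hlead j
        have hp' : ((p : ℂ)) ^ (L j) ≠ 0 := pow_ne_zero _ (by exact_mod_cast hpne)
        have hzi : (x.2 j)⁻¹ ≠ 0 := inv_ne_zero (hz0 j)
        by_contra hne
        exact (mul_ne_zero (mul_ne_zero (mul_ne_zero hzi hne) hc') hp') hco.symm
      have hv1 : ∀ (j : Fin K) (ℓ : ℕ), ℓ < L j → pronyCoef v.1 j ℓ = 0 := by
        intro j
        have hgj := hg j
        rw [pronyG, hv2 j, mul_zero, map_zero, zero_mul, add_zero] at hgj
        exact prony_sum_S_eq_zero t p hpne (L j) _ hgj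
      have : v = (0, 0) := by
        refine Prod.ext ?_ ?_
        · funext j ℓ
          have h := hv1 j (ℓ : ℕ) ℓ.isLt
          rwa [pronyCoef_eq] at h
        · funext j
          exact hv2 j
      rw [this]
      rfl
    have hinj : Function.Injective (fderiv ℂ P x) := by
      intro a b hab
      have h0 : fderiv ℂ P x (a - b) = 0 := by
        rw [map_sub, hab, sub_self]
      have := hkerzero (a - b) h0
      exact sub_eq_zero.mp this
    refine ⟨hinj, ?_⟩
    have hrank : Module.finrank ℂ (((j : Fin K) → Fin (L j) → ℂ) × (Fin K → ℂ))
        = Module.finrank ℂ (Fin R → ℂ) := by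
      rw [Module.finrank_prod, Module.finrank_pi_fintype, Module.finrank_pi]
      simp only [Module.finrank_pi, Fintype.card_fin]
      rw [hR, Finset.sum_add_distrib]
      simp [Finset.card_univ]
    have hinj' : Function.Injective
        ((fderiv ℂ P x : (((j : Fin K) → Fin (L j) → ℂ) × (Fin K → ℂ)) →ₗ[ℂ] (Fin R → ℂ))) := hinj
    have := (LinearMap.injective_iff_surjective_of_finrank_eq_finrank hrank).mp hinj'
    exact this
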